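/- For every nonnegative integer n and complex a, and nonzero real x (a > 0), the identity ₃F₂(-n, a+ix, a-ix; a+1, a+1/2; 1) = (ia/x) · ₂F₁(-2n-1, a+ix; 2a; 2) holds, where both sides are terminating hypergeometric sums and i is the imaginary unit. -/

import Mathlib

open Finset Complex

/-- Pochhammer symbol `(a)_k = a(a+1)⋯(a+k-1)`. -/
noncomputable def poch (a : ℂ) (k : ℕ) : ℂ := ∏ j ∈ Finset.range k, (a + j)

/-- Terminating hypergeometric series `₃F₂(-n, A, B; C, D; z)`. -/
noncomputable def F32 (n : ℕ) (A B C D z : ℂ) : ℂ :=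
  ∑ k ∈ Finset.range (n + 1),
    poch (-(n : ℂ)) k * poch A k * poch B k / (poch C k * poch D k * (k.factorial : ℂ)) * z ^ k

/-- Terminating hypergeometric series `₂F₁(-m, A; C; z)`. -/
noncomputable def F21 (m : ℕ) (A C z : ℂ) : ℂ :=
  ∑ k ∈ Finset.range (m + 1),
    poch (-(m : ℂ)) k * poch A k / (poch C k * (k.factorial : ℂ)) * z ^ k

lemma poch_zero (c : ℂ) : poch c 0 = 1 := by simp [poch]
lemma poch_succ_last (c : ℂ) (k : ℕ) : poch c (k + 1) = poch c k * (c + k) := by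
  simp [poch, Finset.prod_range_succ]
lemma poch_succ_first (c : ℂ) (k : ℕ) : poch c (k + 1) = c * poch (c + 1) k := by
  rw [poch, poch, Finset.prod_range_succ']
  simp only [Nat.cast_zero, add_zero]
  rw [mul_comm]
  congr 1
  apply Finset.prod_congr rfl
  intro j _
  push_cast
  ring

/-- duplication: `(2c)_{2k} = 4^k (c)_k (c+1/2)_k` -/
lemma poch_dup (c : ℂ) (k : ℕ) :
    poch (2 * c) (2 * k) = 4 ^ k * poch c k * poch (c + 1/2) k := by
  induction k with
  | zero => simp [poch_zero]
  | succ k ih =>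
    have h2 : 2 * (k + 1) = (2 * k) + 1 + 1 := by ring
    rw [h2, poch_succ_last, poch_succ_last, ih, poch_succ_last, poch_succ_last]
    push_cast
    ring

lemma poch_pos_ne_zero (r : ℝ) (hr : 0 < r) (k : ℕ) : poch (r : ℂ) k ≠ 0 := by
  rw [poch]
  apply Finset.prod_ne_zero_iff.mpr
  intro j _
  have : ((r : ℂ) + j) = ((r + j : ℝ) : ℂ) := by push_cast; ring
  rw [this]
  simp only [ne_eq, Complex.ofReal_eq_zero]
  positivity

/-- Chu-Vandermonde (terminating Gauss, cleared form):
`∑ (-1)^l C(N,l) (B)_l (C+l)_{N-l} = (C-B)_N` -/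
lemma gauss (N : ℕ) (B C : ℂ) :
    ∑ l ∈ Finset.range (N + 1),
      (-1) ^ l * (N.choose l : ℂ) * poch B l * poch (C + l) (N - l)
    = poch (C - B) N := by
  induction N generalizing C with
  | zero => simp [poch_zero]
  | succ N ih =>
    have key : ∀ l ∈ Finset.range (N + 2),
        (-1) ^ l * ((N+1).choose l : ℂ) * poch B l * poch (C + l) (N + 1 - l)
        = ((-1) ^ l * (N.choose l : ℂ) * poch B l * poch (C + l) (N + 1 - l))
          + ((-1) ^ l * (if l = 0 then (0:ℂ) else (N.choose (l-1) : ℂ))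
              * poch B l * poch (C + l) (N + 1 - l)) := by
      intro l _
      rcases l with _ | l
      · simp
      · rw [Nat.choose_succ_succ]
        simp only [if_neg (Nat.succ_ne_zero l), Nat.succ_sub_one]
        push_cast
        ring
    rw [Finset.sum_congr rfl key, Finset.sum_add_distrib]
    have e1 : ∑ l ∈ Finset.range (N + 2),
        (-1) ^ l * (N.choose l : ℂ) * poch B l * poch (C + l) (N + 1 - l)
        = ∑ l ∈ Finset.range (N + 1),
        (-1) ^ l * (N.choose l : ℂ) * poch B l * ((C + l) * poch ((C + 1) + l) (N - l)) := by
      rw [Finset.sum_range_succ]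
      simp only [Nat.choose_succ_self, Nat.cast_zero, mul_zero, zero_mul, add_zero]
      apply Finset.sum_congr rfl
      intro l hl
      rw [Finset.mem_range] at hl
      have h1 : N + 1 - l = (N - l) + 1 := by omega
      rw [h1, poch_succ_first]
      ring_nf
    have e2 : ∑ l ∈ Finset.range (N + 2),
        (-1) ^ l * (if l = 0 then (0:ℂ) else (N.choose (l-1) : ℂ))
          * poch B l * poch (C + l) (N + 1 - l)
        = ∑ l ∈ Finset.range (N + 1),
        (-1) ^ l * (N.choose l : ℂ) * poch B l * (-(B + l) * poch ((C + 1) + l) (N - l)) := by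
      rw [Finset.sum_range_succ']
      simp only [if_pos rfl, if_true, eq_self_iff_true, mul_zero, zero_mul, add_zero,
        if_neg (Nat.succ_ne_zero _), Nat.succ_sub_one]
      apply Finset.sum_congr rfl
      intro l hl
      have h1 : N + 1 - (l + 1) = N - l := by omega
      rw [h1, poch_succ_last]
      push_cast
      ring
    rw [e1, e2, ← Finset.sum_add_distrib]
    have e3 : ∀ l ∈ Finset.range (N + 1),
        (-1) ^ l * (N.choose l : ℂ) * poch B l * ((C + l) * poch ((C + 1) + l) (N - l))
        + (-1) ^ l * (N.choose l : ℂ) * poch B l * (-(B + l) * poch ((C + 1) + l) (N - l))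
        = (C - B) * ((-1) ^ l * (N.choose l : ℂ) * poch B l * poch ((C + 1) + l) (N - l)) := by
      intro l _
      ring
    rw [Finset.sum_congr rfl e3, ← Finset.mul_sum, ih (C + 1), poch_succ_first]
    have : C + 1 - B = C - B + 1 := by ring
    rw [this]

lemma poch_add (c : ℂ) (p q : ℕ) : poch c (p + q) = poch c p * poch (c + p) q := by
  rw [poch, poch, poch, Finset.prod_range_add]
  congr 1
  apply Finset.prod_congr rfl
  intro j _
  push_cast
  ring

lemma poch_one (c : ℂ) : poch c 1 = c := by simp [poch]

/-- `(c+1)_{q+1} = (c)_{q+1} + (q+1)·(c+1)_q` -/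
lemma poch_diff (c : ℂ) (q : ℕ) :
    poch (c + 1) (q + 1) = poch c (q + 1) + (q + 1) * poch (c + 1) q := by
  rw [poch_succ_last, poch_succ_first]
  ring

lemma poch_neg_nat (m k : ℕ) (h : k ≤ m) :
    poch (-(m : ℂ)) k = (-1) ^ k * (k.factorial : ℂ) * (m.choose k : ℂ) := by
  induction k with
  | zero => simp [poch_zero]
  | succ k ih =>
    have hk : k ≤ m := Nat.le_of_succ_le h
    rw [poch_succ_last, ih hk]
    have hch : (m.choose (k+1) : ℂ) * (k+1) = (m.choose k : ℂ) * ((m : ℂ) - k) := by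
      have := Nat.choose_succ_right_eq m k
      have hsub : ((m - k : ℕ) : ℂ) = (m : ℂ) - k := by
        push_cast [Nat.cast_sub hk]; ring
      calc (m.choose (k+1) : ℂ) * (k+1) = ((m.choose (k+1) * (k+1) : ℕ) : ℂ) := by push_cast; ring
        _ = ((m.choose k * (m - k) : ℕ) : ℂ) := by rw [this]
        _ = (m.choose k : ℂ) * ((m : ℂ) - k) := by push_cast [Nat.cast_sub hk]; ring
    have : ((k+1).factorial : ℂ) = (k.factorial : ℂ) * (k+1) := by
      rw [Nat.factorial_succ]; push_cast; ring
    rw [this]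
    rw [pow_succ]
    linear_combination ((-1 : ℂ)) ^ k * (k.factorial : ℂ) * hch

noncomputable def Gs (A B : ℂ) (m : ℕ) : ℂ :=
  ∑ j ∈ Finset.range (m + 1), (-1) ^ j * (m.choose j : ℂ) * poch A j * poch B (m - j)

/-- weighted companion sum -/
noncomputable def Fs (A B : ℂ) (m : ℕ) : ℂ :=
  ∑ j ∈ Finset.range (m + 1),
    (-1) ^ j * (m.choose j : ℂ) * ((m : ℂ) - 2 * j) * poch A j * poch B (m - j)

lemma S1_eq (A B : ℂ) (m : ℕ) :
    ∑ j ∈ Finset.range (m + 2), (-1) ^ j * (m.choose j : ℂ) * poch A j * poch B (m + 1 - j)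
    = ∑ j ∈ Finset.range (m + 1),
      (-1) ^ j * (m.choose j : ℂ) * poch A j * (poch B (m - j) * (B + ((m : ℂ) - j))) := by
  rw [Finset.sum_range_succ]
  simp only [Nat.choose_succ_self, Nat.cast_zero, mul_zero, zero_mul, add_zero]
  apply Finset.sum_congr rfl
  intro j hj
  rw [Finset.mem_range] at hj
  have h1 : m + 1 - j = (m - j) + 1 := by omega
  rw [h1, poch_succ_last]
  have h2 : ((m - j : ℕ) : ℂ) = (m : ℂ) - j := by
    push_cast [Nat.cast_sub (by omega : j ≤ m)]; ring
  rw [h2]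

lemma S2_eq (A B : ℂ) (m : ℕ) :
    ∑ j ∈ Finset.range (m + 2),
      (-1) ^ j * (if j = 0 then (0:ℂ) else (m.choose (j-1) : ℂ)) * poch A j * poch B (m + 1 - j)
    = ∑ j ∈ Finset.range (m + 1),
      (-1) ^ j * (m.choose j : ℂ) * poch A j * (-(A + j) * poch B (m - j)) := by
  rw [Finset.sum_range_succ']
  simp only [if_pos rfl, if_true, eq_self_iff_true, mul_zero, zero_mul, add_zero,
    if_neg (Nat.succ_ne_zero _), Nat.succ_sub_one]
  apply Finset.sum_congr rfl
  intro j hj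
  have h1 : m + 1 - (j + 1) = m - j := by omega
  rw [h1, poch_succ_last]
  push_cast
  ring

lemma Gs_succ (A B : ℂ) (m : ℕ) :
    Gs A B (m + 1) = (B - A) * Gs A B m + Fs A B m := by
  rw [Gs]
  have key : ∀ j ∈ Finset.range (m + 2),
      (-1) ^ j * ((m+1).choose j : ℂ) * poch A j * poch B (m + 1 - j)
      = ((-1) ^ j * (m.choose j : ℂ) * poch A j * poch B (m + 1 - j))
        + ((-1) ^ j * (if j = 0 then (0:ℂ) else (m.choose (j-1) : ℂ))
            * poch A j * poch B (m + 1 - j)) := by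
    intro j _
    rcases j with _ | j
    · simp
    · rw [Nat.choose_succ_succ]
      simp only [if_neg (Nat.succ_ne_zero j), Nat.succ_sub_one]
      push_cast
      ring
  rw [Finset.sum_congr rfl key, Finset.sum_add_distrib, S1_eq, S2_eq,
    ← Finset.sum_add_distrib, Gs, Fs, Finset.mul_sum, ← Finset.sum_add_distrib]
  apply Finset.sum_congr rfl
  intro j hj
  rw [Finset.mem_range] at hj
  ring

lemma Fs_succ (A B : ℂ) (m : ℕ) :
    Fs A B (m + 1) = ((m : ℂ) + 1) * ((m : ℂ) + A + B) * Gs A B m := by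
  rw [Fs]
  have key : ∀ j ∈ Finset.range (m + 2),
      (-1) ^ j * ((m+1).choose j : ℂ) * (((m + 1 : ℕ) : ℂ) - 2 * j) * poch A j
          * poch B (m + 1 - j)
      = ((m : ℂ) + 1) *
        (((-1) ^ j * (m.choose j : ℂ) * poch A j * poch B (m + 1 - j))
        - ((-1) ^ j * (if j = 0 then (0:ℂ) else (m.choose (j-1) : ℂ))
            * poch A j * poch B (m + 1 - j))) := by
    intro j hj
    rw [Finset.mem_range] at hj
    rcases j with _ | j
    · simp; push_cast; ring
    · have hjm : j ≤ m := by omega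
      -- h1 : C(m+1,j+1) * (m-j) = (m+1) * C(m,j+1)
      have h1 : ((m+1).choose (j+1) : ℂ) * ((m : ℂ) - j) = ((m:ℂ)+1) * (m.choose (j+1) : ℂ) := by
        have hsub : m + 1 - (j + 1) = m - j := by omega
        have ha : (m+1) * m.choose (j+1) = (m+1).choose (j+2) * (j+2) := by
          simpa [Nat.succ_eq_add_one] using Nat.add_one_mul_choose_eq m (j+1)
        have hb : (m+1).choose (j+2) * (j+2) = (m+1).choose (j+1) * (m - j) := by
          simpa [hsub] using Nat.choose_succ_right_eq (m+1) (j+1)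
        have hnat : (m+1).choose (j+1) * (m - j) = (m+1) * m.choose (j+1) :=
          (ha.trans hb).symm
        calc ((m+1).choose (j+1) : ℂ) * ((m : ℂ) - j)
            = (((m+1).choose (j+1) * (m - j) : ℕ) : ℂ) := by
              push_cast [Nat.cast_sub hjm]; ring
          _ = (((m+1) * m.choose (j+1) : ℕ) : ℂ) := by rw [hnat]
          _ = ((m:ℂ)+1) * (m.choose (j+1) : ℂ) := by push_cast; ring
      have h2 : ((m+1).choose (j+1) : ℂ) * ((j : ℂ) + 1) = ((m:ℂ)+1) * (m.choose j : ℂ) := by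
        have hn := Nat.add_one_mul_choose_eq m j
        have hnat : (m+1) * (m.choose j) = (m+1).choose (j+1) * (j+1) := by
          simpa [Nat.succ_eq_add_one] using hn
        calc ((m+1).choose (j+1) : ℂ) * ((j : ℂ) + 1)
            = (((m+1).choose (j+1) * (j+1) : ℕ) : ℂ) := by push_cast; ring
          _ = (((m+1) * (m.choose j) : ℕ) : ℂ) := by rw [← hnat]
          _ = ((m:ℂ)+1) * (m.choose j : ℂ) := by push_cast; ring
      simp only [if_neg (Nat.succ_ne_zero j), Nat.succ_sub_one]
      push_cast
      linear_combination ((-1:ℂ))^(j+1) * poch A (j+1) * poch B (m - j) * (h1 - h2)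
  rw [Finset.sum_congr rfl key, ← Finset.mul_sum, Finset.sum_sub_distrib, S1_eq, S2_eq,
    ← Finset.sum_sub_distrib, Gs, Finset.mul_sum, Finset.mul_sum]
  apply Finset.sum_congr rfl
  intro j _
  ring

lemma Gs_rec (A B : ℂ) (m : ℕ) :
    Gs A B (m + 2) = (B - A) * Gs A B (m + 1)
      + ((m : ℂ) + 1) * ((m : ℂ) + A + B) * Gs A B m := by
  rw [Gs_succ, Fs_succ]

noncomputable def RE (A B : ℂ) (n : ℕ) : ℂ :=
  ∑ k ∈ Finset.range (n + 1), (-1) ^ k * (n.choose k : ℂ) * 4 ^ k * poch A k * poch B k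
    * poch (A + B + 2 * k) (2 * (n - k))

noncomputable def RO (A B : ℂ) (n : ℕ) : ℂ :=
  ∑ k ∈ Finset.range (n + 1), (-1) ^ k * (n.choose k : ℂ) * 4 ^ k * poch A k * poch B k
    * poch (A + B + 1 + 2 * k) (2 * (n - k))

/-- `(n+1-k)·C(n+1,k) = (n+1)·C(n,k)` over ℂ, for `k ≤ n+1`. -/
lemma choose_aux1 (n k : ℕ) (h : k ≤ n + 1) :
    (((n+1).choose k : ℂ)) * (((n + 1 - k : ℕ)) : ℂ) = ((n : ℂ) + 1) * (n.choose k : ℂ) := by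
  have ha : (n+1) * n.choose k = (n+1).choose (k+1) * (k+1) := by
    simpa [Nat.succ_eq_add_one] using Nat.add_one_mul_choose_eq n k
  have hb : (n+1).choose (k+1) * (k+1) = (n+1).choose k * (n + 1 - k) :=
    Nat.choose_succ_right_eq (n+1) k
  have hnat : (n+1).choose k * (n + 1 - k) = (n+1) * n.choose k := (ha.trans hb).symm
  calc ((n+1).choose k : ℂ) * ((n + 1 - k : ℕ) : ℂ)
      = (((n+1).choose k * (n + 1 - k) : ℕ) : ℂ) := by push_cast; ring
    _ = (((n+1) * n.choose k : ℕ) : ℂ) := by rw [hnat]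
    _ = ((n : ℂ) + 1) * (n.choose k : ℂ) := by push_cast; ring

/-- `k·C(n,k) = (n+1-k)·C(n,k-1)` over ℂ, for `1 ≤ k ≤ n+1`. -/
lemma choose_aux2 (n k : ℕ) (h1 : 1 ≤ k) (h2 : k ≤ n + 1) :
    ((n.choose k : ℂ)) * (k : ℂ) = (((n + 1 - k : ℕ)) : ℂ) * (n.choose (k-1) : ℂ) := by
  obtain ⟨j, rfl⟩ : ∃ j, k = j + 1 := ⟨k - 1, by omega⟩
  have ha : (n.choose (j+1) : ℕ) * (j+1) = n.choose j * (n - j) :=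
    Nat.choose_succ_right_eq n j
  have hs : n + 1 - (j + 1) = n - j := by omega
  have hnat : n.choose (j+1) * (j+1) = (n - j) * n.choose j := by rw [ha, Nat.mul_comm]
  rw [hs]
  simp only [Nat.add_sub_cancel]
  exact_mod_cast congrArg (Nat.cast : ℕ → ℂ) hnat

lemma R2 (A B : ℂ) (n : ℕ) :
    RO A B (n + 1) = RE A B (n + 1)
      + (2 * (n : ℂ) + 2) * (2 * (n : ℂ) + 1 + A + B) * RO A B n := by
  have hRO : ∑ k ∈ Finset.range (n + 2),
      (-1) ^ k * (n.choose k : ℂ) * 4 ^ k * poch A k * poch B k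
        * poch (A + B + 1 + 2 * k) (2 * (n - k)) = RO A B n := by
    rw [Finset.sum_range_succ, RO]
    simp [Nat.choose_succ_self]
  rw [RO, RE, ← hRO, Finset.mul_sum, ← Finset.sum_add_distrib]
  apply Finset.sum_congr rfl
  intro k hk
  rw [Finset.mem_range] at hk
  rcases Nat.lt_or_ge k (n + 1) with hkn | hkn
  · -- k ≤ n
    have hkn' : k ≤ n := by omega
    have hE1 : poch (A + B + 1 + 2 * k) (2 * (n + 1 - k))
        = poch (A + B + 1 + 2 * k) (2 * (n - k)) * (A + B + 2 * n + 1) * (A + B + 2 * n + 2) := by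
      have h2 : 2 * (n + 1 - k) = 2 * (n - k) + 1 + 1 := by omega
      rw [h2, poch_succ_last, poch_succ_last]
      push_cast [Nat.cast_sub hkn']
      ring
    have hE2 : poch (A + B + 2 * k) (2 * (n + 1 - k))
        = poch (A + B + 2 * k) (2 * (n - k)) * (A + B + 2 * n) * (A + B + 2 * n + 1) := by
      have h2 : 2 * (n + 1 - k) = 2 * (n - k) + 1 + 1 := by omega
      rw [h2, poch_succ_last, poch_succ_last]
      push_cast [Nat.cast_sub hkn']
      ring
    have hrel : poch (A + B + 1 + 2 * k) (2 * (n - k)) * (A + B + 2 * n + 1)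
        = poch (A + B + 2 * k) (2 * (n - k)) * (A + B + 2 * n)
          + (2 * (n : ℂ) - 2 * k + 1) * poch (A + B + 1 + 2 * k) (2 * (n - k)) := by
      have hd := poch_diff (A + B + 2 * k) (2 * (n - k))
      rw [show (A + B + 2 * (k:ℂ) + 1) = A + B + 1 + 2 * k from by ring] at hd
      rw [poch_succ_last, poch_succ_last] at hd
      push_cast [Nat.cast_sub hkn'] at hd
      linear_combination hd
    have hch := choose_aux1 n k (by omega)
    rw [show ((n + 1 - k : ℕ) : ℂ) = (n : ℂ) + 1 - k from by
      push_cast [Nat.cast_sub (by omega : k ≤ n + 1)]; ring] at hch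
    linear_combination
      (((n+1).choose k : ℂ)) * ((-1:ℂ))^k * 4^k * poch A k * poch B k * hE1
      - (((n+1).choose k : ℂ)) * ((-1:ℂ))^k * 4^k * poch A k * poch B k * hE2
      + (((n+1).choose k : ℂ)) * ((-1:ℂ))^k * 4^k * poch A k * poch B k
          * (A + B + 2 * n + 1) * hrel
      + 2 * ((-1:ℂ))^k * 4^k * poch A k * poch B k * (A + B + 2 * n + 1)
          * poch (A + B + 1 + 2 * k) (2 * (n - k)) * hch
  · -- k = n + 1
    have hk1 : k = n + 1 := by omega
    subst hk1
    simp [Nat.choose_succ_self, Nat.sub_self, poch_zero]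

lemma R1 (A B : ℂ) (n : ℕ) :
    RE A B (n + 1) = (B - A) ^ 2 * RO A B n
      + (2 * (n : ℂ) + 1) * (2 * (n : ℂ) + A + B) * RE A B n := by
  have hstep : RE A B (n + 1) = ∑ k ∈ Finset.range (n + 2),
      (((-1) ^ k * (n.choose k : ℂ) * 4 ^ k * (A + B + 2 * k) ^ 2 * poch A k * poch B k
          * poch (A + B + 1 + 2 * k) (2 * (n - k)))
        + ((if k = 0 then (0:ℂ) else
            (-1) ^ k * (n.choose (k-1) : ℂ) * 4 ^ k * poch A k * poch B k
              * poch (A + B - 1 + 2 * k) (2 * (n + 1 - k))))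
        + ((2 * (n : ℂ) + 1) * (2 * (n : ℂ) + A + B)
            * ((-1) ^ k * (n.choose k : ℂ) * 4 ^ k * poch A k * poch B k
              * poch (A + B + 2 * k) (2 * (n - k))))) := by
    rw [RE]
    apply Finset.sum_congr rfl
    intro k hk
    rw [Finset.mem_range] at hk
    rcases k with _ | j
    · -- k = 0
      simp only [if_pos rfl, if_true, eq_self_iff_true, pow_zero, Nat.choose_zero_right,
        Nat.cast_one, Nat.cast_zero, mul_zero, add_zero, zero_add, Nat.sub_zero, one_mul,
        mul_one, poch_zero]
      have hf1 : poch (A + B) (2 * (n + 1))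
          = poch (A + B) (2 * n) * (A + B + 2 * n) * (A + B + 2 * n + 1) := by
        rw [show 2 * (n + 1) = 2 * n + 1 + 1 from by omega, poch_succ_last, poch_succ_last]
        push_cast
        ring
      have hf3 : (A + B) * poch (A + B + 1) (2 * n) = poch (A + B) (2 * n) * (A + B + 2 * n) := by
        have h2 := poch_succ_last (A + B) (2 * n)
        rw [poch_succ_first (A + B) (2 * n)] at h2
        push_cast at h2
        linear_combination h2
      rw [hf1]
      linear_combination (-(A + B)) * hf3
    · -- k = j+1 ≥ 1
      simp only [if_neg (Nat.succ_ne_zero j), Nat.succ_sub_one]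
      push_cast
      rcases Nat.lt_or_ge (j + 1) (n + 1) with hkn | hkn
      · -- 1 ≤ k ≤ n
        have hkn' : j + 1 ≤ n := by omega
        have hf1 : poch (A + B + 2 * ((j:ℂ) + 1)) (2 * (n - j))
            = poch (A + B + 2 * ((j:ℂ) + 1)) (2 * (n - (j + 1)))
              * (A + B + 2 * n) * (A + B + 2 * n + 1) := by
          rw [show 2 * (n - j) = 2 * (n - (j + 1)) + 1 + 1 from by omega,
            poch_succ_last, poch_succ_last]
          push_cast [Nat.cast_sub hkn']
          ring
        have hf2 : poch (A + B - 1 + 2 * ((j:ℂ) + 1)) (2 * (n - j))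
            = poch (A + B + 2 * ((j:ℂ) + 1)) (2 * (n - (j + 1)))
                * (A + B + 2 * n) * (A + B + 2 * n + 1)
              - (2 * (n : ℂ) - 2 * ((j:ℂ) + 1) + 2)
                * poch (A + B + 2 * ((j:ℂ) + 1)) (2 * (n - (j + 1))) * (A + B + 2 * n) := by
          have hd := poch_diff (A + B - 1 + 2 * ((j:ℂ) + 1)) (2 * (n - (j + 1)) + 1)
          rw [show (A + B - 1 + 2 * ((j:ℂ) + 1) + 1) = A + B + 2 * ((j:ℂ) + 1) from by ring]
            at hd
          rw [show 2 * (n - j) = 2 * (n - (j + 1)) + 1 + 1 from by omega]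
          rw [poch_succ_last, poch_succ_last] at hd
          push_cast [Nat.cast_sub hkn'] at hd
          linear_combination -hd
        have hf3 : (A + B + 2 * ((j:ℂ) + 1)) * poch (A + B + 1 + 2 * ((j:ℂ) + 1))
              (2 * (n - (j + 1)))
            = poch (A + B + 2 * ((j:ℂ) + 1)) (2 * (n - (j + 1))) * (A + B + 2 * n) := by
          have h2 := poch_succ_last (A + B + 2 * ((j:ℂ) + 1)) (2 * (n - (j + 1)))
          rw [poch_succ_first (A + B + 2 * ((j:ℂ) + 1)) (2 * (n - (j + 1)))] at h2
          rw [show (A + B + 2 * ((j:ℂ) + 1) + 1) = A + B + 1 + 2 * ((j:ℂ) + 1) from by ring]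
            at h2
          push_cast [Nat.cast_sub hkn'] at h2
          linear_combination h2
        have hpas : (((n+1).choose (j+1) : ℂ)) = (n.choose j : ℂ) + (n.choose (j+1) : ℂ) := by
          rw [Nat.choose_succ_succ]
          push_cast
          ring
        have hch2 := choose_aux2 n (j+1) (by omega) (by omega)
        rw [show ((n + 1 - (j+1) : ℕ) : ℂ) = (n : ℂ) + 1 - ((j:ℂ) + 1) from by
          push_cast [Nat.cast_sub (by omega : j ≤ n)]; ring] at hch2
        simp only [Nat.add_sub_cancel] at hch2
        push_cast at hch2 hpas
        linear_combination
          ((-1:ℂ))^(j+1) * 4^(j+1) * poch A (j+1) * poch B (j+1) * (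
            (((n+1).choose (j+1) : ℂ)) * hf1
            - ((n.choose j : ℂ)) * hf2
            - ((n.choose (j+1) : ℂ)) * (A + B + 2 * ((j:ℂ) + 1)) * hf3
            + poch (A + B + 2 * ((j:ℂ) + 1)) (2 * (n - (j + 1)))
                * (A + B + 2 * n) * (A + B + 2 * n + 1) * hpas
            - 2 * poch (A + B + 2 * ((j:ℂ) + 1)) (2 * (n - (j + 1))) * (A + B + 2 * n) * hch2)
      · -- k = n+1
        have hcc : (n+1).choose (j+1) = 1 := by
          rw [show j = n from by omega]; exact Nat.choose_self _
        have hc0 : n.choose (j+1) = 0 := by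
          rw [show j = n from by omega]; exact Nat.choose_succ_self n
        have hc1 : n.choose j = 1 := by
          rw [show j = n from by omega]; exact Nat.choose_self _
        rw [show (2 * (n - (j+1))) = 0 from by omega, show (2 * (n - j)) = 0 from by
          omega]
        simp only [poch_zero, hcc, hc0, hc1]
        push_cast
        ring
  -- now assemble the three sums
  have hW : ∑ k ∈ Finset.range (n + 2),
      ((-1) ^ k * (n.choose k : ℂ) * 4 ^ k * (A + B + 2 * k) ^ 2 * poch A k * poch B k
        * poch (A + B + 1 + 2 * k) (2 * (n - k)))
      = ∑ k ∈ Finset.range (n + 1),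
      ((-1) ^ k * (n.choose k : ℂ) * 4 ^ k * (A + B + 2 * k) ^ 2 * poch A k * poch B k
        * poch (A + B + 1 + 2 * k) (2 * (n - k))) := by
    rw [Finset.sum_range_succ]
    simp [Nat.choose_succ_self]
  have hZ : ∑ k ∈ Finset.range (n + 2),
      ((2 * (n : ℂ) + 1) * (2 * (n : ℂ) + A + B)
        * ((-1) ^ k * (n.choose k : ℂ) * 4 ^ k * poch A k * poch B k
          * poch (A + B + 2 * k) (2 * (n - k))))
      = (2 * (n : ℂ) + 1) * (2 * (n : ℂ) + A + B) * RE A B n := by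
    rw [Finset.sum_range_succ, RE, Finset.mul_sum]
    simp [Nat.choose_succ_self]
  have hU : ∑ k ∈ Finset.range (n + 2),
      (if k = 0 then (0:ℂ) else
        (-1) ^ k * (n.choose (k-1) : ℂ) * 4 ^ k * poch A k * poch B k
          * poch (A + B - 1 + 2 * k) (2 * (n + 1 - k)))
      = ∑ k ∈ Finset.range (n + 1),
      (-(4 * ((-1) ^ k * (n.choose k : ℂ) * 4 ^ k * (poch A k * (A + k)) * (poch B k * (B + k))
          * poch (A + B + 1 + 2 * k) (2 * (n - k))))) := by
    rw [Finset.sum_range_succ']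
    simp only [if_pos rfl, if_true, eq_self_iff_true, add_zero,
      if_neg (Nat.succ_ne_zero _), Nat.succ_sub_one]
    apply Finset.sum_congr rfl
    intro k hk
    rw [Finset.mem_range] at hk
    rw [show n + 1 - (k + 1) = n - k from by omega, ← poch_succ_last, ← poch_succ_last]
    push_cast
    rw [show (A + B - 1 + 2 * ((k:ℂ) + 1)) = A + B + 1 + 2 * k from by ring]
    ring
  have hV : (B - A) ^ 2 * RO A B n = ∑ k ∈ Finset.range (n + 1),
      (((-1) ^ k * (n.choose k : ℂ) * 4 ^ k * (A + B + 2 * k) ^ 2 * poch A k * poch B k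
        * poch (A + B + 1 + 2 * k) (2 * (n - k)))
      + (-(4 * ((-1) ^ k * (n.choose k : ℂ) * 4 ^ k * (poch A k * (A + k)) * (poch B k * (B + k))
          * poch (A + B + 1 + 2 * k) (2 * (n - k)))))) := by
    rw [RO, Finset.mul_sum]
    apply Finset.sum_congr rfl
    intro k _
    ring
  rw [hstep, Finset.sum_add_distrib, Finset.sum_add_distrib, hW, hZ, hU, hV,
    Finset.sum_add_distrib]

lemma EO (A B : ℂ) (n : ℕ) :
    Gs A B (2*n) = RE A B n ∧ Gs A B (2*n+1) = (B - A) * RO A B n := by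
  induction n with
  | zero =>
    constructor
    · simp [Gs, RE, poch_zero, Finset.sum_range_one]
    · simp [Gs, RO, poch_zero, poch_one, Finset.sum_range_succ, Finset.sum_range_one]
      ring
  | succ n ih =>
    obtain ⟨ihE, ihO⟩ := ih
    have hrec1 := Gs_rec A B (2*n)
    have hrec2 := Gs_rec A B (2*n+1)
    have h1 : Gs A B (2*(n+1)) = RE A B (n+1) := by
      rw [show 2*(n+1) = 2*n+2 from by ring, hrec1, ihE, ihO, R1]
      push_cast
      ring
    constructor
    · exact h1
    · rw [show 2*(n+1)+1 = (2*n+1)+2 from by ring, hrec2,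
        show (2*n+1)+1 = 2*(n+1) from by ring, h1, ihO, R2]
      push_cast
      ring

lemma F21_clear (m : ℕ) (A C : ℂ) (hC : ∀ k, k ≤ m → poch C k ≠ 0) :
    poch C m * F21 m A C 2 = Gs A (C - A) m := by
  -- step 1: clear denominators termwise
  have step1 : poch C m * F21 m A C 2 = ∑ k ∈ Finset.range (m+1),
      (-1) ^ k * (m.choose k : ℂ) * poch A k * poch (C + k) (m - k) * 2 ^ k := by
    rw [F21, Finset.mul_sum]
    apply Finset.sum_congr rfl
    intro k hk
    rw [Finset.mem_range] at hk
    have hk' : k ≤ m := by omega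
    have hsplit : poch C m = poch C k * poch (C + k) (m - k) := by
      rw [← poch_add]
      congr 1
      omega
    rw [poch_neg_nat m k hk', hsplit]
    have h1 : poch C k ≠ 0 := hC k hk'
    have h2 : (k.factorial : ℂ) ≠ 0 := Nat.cast_ne_zero.mpr k.factorial_ne_zero
    field_simp
  -- step 2: expand 2^k and exchange summation
  have step2 : ∀ k, k ≤ m → (-1 : ℂ) ^ k * (m.choose k : ℂ) * poch A k * poch (C + k) (m - k)
        * 2 ^ k
      = ∑ j ∈ Finset.range (k+1), (-1) ^ k * (m.choose j : ℂ) * ((m-j).choose (k-j) : ℂ)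
          * poch A k * poch (C + k) (m - k) := by
    intro k hk'
    have h2k : (2:ℂ) ^ k = ∑ j ∈ Finset.range (k+1), (k.choose j : ℂ) := by
      have hn := Nat.sum_range_choose k
      calc (2:ℂ) ^ k = ((2 ^ k : ℕ) : ℂ) := by push_cast; ring
        _ = ((∑ j ∈ Finset.range (k+1), k.choose j : ℕ) : ℂ) := by rw [hn]
        _ = ∑ j ∈ Finset.range (k+1), (k.choose j : ℂ) := by push_cast; ring
    rw [h2k, Finset.mul_sum]
    apply Finset.sum_congr rfl
    intro j hj
    rw [Finset.mem_range] at hj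
    have hcm : (m.choose k : ℂ) * (k.choose j : ℂ)
        = (m.choose j : ℂ) * ((m-j).choose (k-j) : ℂ) := by
      have := Nat.choose_mul (n := m) (by omega : j ≤ k)
      exact_mod_cast congrArg (Nat.cast : ℕ → ℂ) this
    linear_combination ((-1:ℂ))^k * poch A k * poch (C + k) (m - k) * hcm
  rw [step1, Finset.sum_congr rfl (fun k hk => step2 k (by
    rw [Finset.mem_range] at hk; omega))]
  -- swap double sum
  have hswap : ∑ k ∈ Finset.range (m+1), ∑ j ∈ Finset.range (k+1),
      (-1) ^ k * (m.choose j : ℂ) * ((m-j).choose (k-j) : ℂ) * poch A k * poch (C + k) (m - k)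
      = ∑ j ∈ Finset.range (m+1), ∑ k ∈ Finset.Ico j (m+1),
      (-1) ^ k * (m.choose j : ℂ) * ((m-j).choose (k-j) : ℂ) * poch A k * poch (C + k) (m - k) := by
    have := Finset.sum_Ico_Ico_comm 0 (m+1) (fun j k =>
      (-1 : ℂ) ^ k * (m.choose j : ℂ) * ((m-j).choose (k-j) : ℂ) * poch A k
        * poch (C + k) (m - k))
    simp only [← Finset.range_eq_Ico] at this
    exact this.symm
  rw [hswap]
  -- inner sums via gauss
  rw [Gs]
  apply Finset.sum_congr rfl
  intro j hj
  rw [Finset.mem_range] at hj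
  have hj' : j ≤ m := by omega
  rw [Finset.sum_Ico_eq_sum_range]
  have hrange : m + 1 - j = (m - j) + 1 := by omega
  rw [hrange]
  have inner : ∀ l ∈ Finset.range ((m-j)+1),
      (-1) ^ (j+l) * (m.choose j : ℂ) * ((m-j).choose ((j+l)-j) : ℂ) * poch A (j+l)
        * poch (C + ((j+l : ℕ) : ℂ)) (m - (j+l))
      = ((-1) ^ j * (m.choose j : ℂ) * poch A j)
        * ((-1) ^ l * ((m-j).choose l : ℂ) * poch (A + j) l
            * poch ((C + j) + l) ((m-j) - l)) := by
    intro l hl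
    rw [Finset.mem_range] at hl
    have h1 : (j+l) - j = l := by omega
    have h2 : m - (j+l) = (m-j) - l := by omega
    have h3 : poch A (j+l) = poch A j * poch (A + j) l := poch_add A j l
    rw [h1, h2, h3]
    rw [show (C + ((j+l : ℕ) : ℂ)) = C + (j:ℂ) + (l:ℂ) from by push_cast; ring]
    ring
  rw [Finset.sum_congr rfl inner, ← Finset.mul_sum, gauss (m-j) (A + j) (C + j)]
  rw [show ((C : ℂ) + j - (A + j)) = C - A from by ring]

lemma F32_clear (n : ℕ) (a : ℝ) (ha : 0 < a) (A B : ℂ) (hAB : A + B = 2 * (a:ℂ)) :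
    poch (2 * (a:ℂ)) (2*n+1) * F32 n A B ((a:ℂ) + 1) ((a:ℂ) + 1/2) 1
      = 2 * (a:ℂ) * RO A B n := by
  rw [F32, RO, Finset.mul_sum, Finset.mul_sum]
  apply Finset.sum_congr rfl
  intro k hk
  rw [Finset.mem_range] at hk
  have hk' : k ≤ n := by omega
  -- split (2a)_{2n+1} = 2a · (2a+1)_{2k} · (2a+1+2k)_{2(n-k)}
  have hsplit1 : poch (2 * (a:ℂ)) (2*n+1) = 2 * (a:ℂ) * poch (2 * (a:ℂ) + 1) (2*n) := by
    rw [show 2*n+1 = (2*n) + 1 from by ring] at *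
    rw [show (2*n) + 1 = 1 + 2*n from by ring, poch_add, poch_one]
    push_cast
    ring_nf
  have hsplit2 : poch (2 * (a:ℂ) + 1) (2*n)
      = poch (2 * (a:ℂ) + 1) (2*k) * poch (2 * (a:ℂ) + 1 + 2*(k:ℂ)) (2*(n-k)) := by
    rw [show 2*n = 2*k + 2*(n-k) from by omega, poch_add]
    rw [show (2 * (a:ℂ) + 1 + ((2*k : ℕ) : ℂ)) = 2 * (a:ℂ) + 1 + 2*(k:ℂ) from by
      push_cast; ring]
  have hdup : poch (2 * (a:ℂ) + 1) (2*k)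
      = 4 ^ k * poch ((a:ℂ) + 1/2) k * poch ((a:ℂ) + 1) k := by
    have := poch_dup ((a:ℂ) + 1/2) k
    rw [show (2 * ((a:ℂ) + 1/2)) = 2 * (a:ℂ) + 1 from by ring,
      show ((a:ℂ) + 1/2 + 1/2) = (a:ℂ) + 1 from by ring] at this
    exact this
  have hneg : poch (-(n:ℂ)) k = (-1) ^ k * (k.factorial : ℂ) * (n.choose k : ℂ) :=
    poch_neg_nat n k hk'
  have hAB' : (A + B + 1 + 2*(k:ℂ)) = 2 * (a:ℂ) + 1 + 2*(k:ℂ) := by rw [hAB]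
  rw [hsplit1, hsplit2, hdup, hneg, hAB', one_pow, mul_one]
  have h1 : poch ((a:ℂ) + 1) k ≠ 0 := by
    have := poch_pos_ne_zero (a + 1) (by linarith) k
    rwa [show (((a + 1 : ℝ)) : ℂ) = (a:ℂ) + 1 from by push_cast; ring] at this
  have h2 : poch ((a:ℂ) + 1/2) k ≠ 0 := by
    have := poch_pos_ne_zero (a + 1/2) (by linarith) k
    rwa [show (((a + 1/2 : ℝ)) : ℂ) = (a:ℂ) + 1/2 from by push_cast; ring] at this
  have h3 : (k.factorial : ℂ) ≠ 0 := Nat.cast_ne_zero.mpr k.factorial_ne_zero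
  rw [← mul_div_assoc, div_eq_iff (mul_ne_zero (mul_ne_zero h1 h2) h3)]
  ring

/-- The identity
`₃F₂(-n, a+ix, a-ix; a+1, a+1/2; 1) = (ia/x)·₂F₁(-2n-1, a+ix; 2a; 2)`
for real `a > 0` and nonzero real `x`. -/
theorem F32_eq_F21_odd (n : ℕ) (a x : ℝ) (ha : 0 < a) (hx : x ≠ 0) :
    F32 n ((a : ℂ) + Complex.I * x) ((a : ℂ) - Complex.I * x) ((a : ℂ) + 1) ((a : ℂ) + 1 / 2) 1 =
      Complex.I * a / x * F21 (2 * n + 1) ((a : ℂ) + Complex.I * x) (2 * a) 2 := by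
  set A : ℂ := (a : ℂ) + Complex.I * x with hAdef
  set B : ℂ := (a : ℂ) - Complex.I * x with hBdef
  have hAB : A + B = 2 * (a:ℂ) := by rw [hAdef, hBdef]; ring
  have hP : poch (2 * (a:ℂ)) (2*n+1) ≠ 0 := by
    have := poch_pos_ne_zero (2 * a) (by linarith) (2*n+1)
    rwa [show (((2 * a : ℝ)) : ℂ) = 2 * (a:ℂ) from by push_cast; ring] at this
  have hx' : (x : ℂ) ≠ 0 := Complex.ofReal_ne_zero.mpr hx
  -- F21 value
  have h21 : F21 (2*n+1) A (2 * (a:ℂ)) 2 = (B - A) * RO A B n / poch (2 * (a:ℂ)) (2*n+1) := by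
    rw [eq_div_iff hP]
    have hC : ∀ k, k ≤ 2*n+1 → poch (2 * (a:ℂ)) k ≠ 0 := by
      intro k _
      have := poch_pos_ne_zero (2 * a) (by linarith) k
      rwa [show (((2 * a : ℝ)) : ℂ) = 2 * (a:ℂ) from by push_cast; ring] at this
    have := F21_clear (2*n+1) A (2 * (a:ℂ)) hC
    rw [show (2 * (a:ℂ) - A) = B from by rw [hBdef, hAdef]; ring] at this
    rw [(EO A B n).2] at this
    linear_combination this
  -- F32 value
  have h32 : F32 n A B ((a:ℂ) + 1) ((a:ℂ) + 1/2) 1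
      = 2 * (a:ℂ) * RO A B n / poch (2 * (a:ℂ)) (2*n+1) := by
    rw [eq_div_iff hP]
    linear_combination F32_clear n a ha A B hAB
  have hcoef : Complex.I * (a:ℂ) / (x:ℂ) * (B - A) = 2 * (a:ℂ) := by
    rw [hBdef, hAdef]
    rw [div_mul_eq_mul_div, div_eq_iff hx']
    linear_combination (-2 * (a:ℂ) * (x:ℂ)) * Complex.I_mul_I
  rw [h32, h21, ← mul_div_assoc]
  congr 1
  linear_combination (-(RO A B n)) * hcoef
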